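/- Let p : Fin d1 × Fin d2 × Fin d3 → ℂ satisfy: for each k the slice p(·,·,k) has all 2×2 minors zero, and the marginal matrix p₊(j,k) = ∑_i p(i,j,k) has all 2×2 minors zero. Suppose moreover that for every j and k, p₊(j,k) ≠ 0. Then the d2 × (d1·d3) flattening (j,(i,k)) ↦ p(i,j,k) has all 2×2 minors zero. -/
import Mathlib


/-- Over the complex numbers, the contraction axiom holds for tables all of
whose marginals `p₊(j,k) = ∑ i, p(i,j,k)` are nonzero. -/
theorem contraction_complex_nonzero_marginals (d1 d2 d3 : ℕ)
    (p : Fin d1 × Fin d2 × Fin d3 → ℂ)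
    (h12 : ∀ (i r : Fin d1) (j s : Fin d2) (k : Fin d3),
      p (i, j, k) * p (r, s, k) - p (i, s, k) * p (r, j, k) = 0)
    (h23 : ∀ (j s : Fin d2) (k t : Fin d3),
      (∑ i, p (i, j, k)) * (∑ i, p (i, s, t)) -
        (∑ i, p (i, j, t)) * (∑ i, p (i, s, k)) = 0)
    (hnz : ∀ (j : Fin d2) (k : Fin d3), (∑ i, p (i, j, k)) ≠ 0) :
    ∀ (j s : Fin d2) (ik rt : Fin d1 × Fin d3),
      p (ik.1, j, ik.2) * p (rt.1, s, rt.2) -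
        p (rt.1, j, rt.2) * p (ik.1, s, ik.2) = 0 := by
  intro j s ik rt
  obtain ⟨i, k⟩ := ik
  obtain ⟨r, t⟩ := rt
  -- Key: summing the rank-1 slice condition over one index:
  have A : ∀ (i : Fin d1) (j s : Fin d2) (k : Fin d3),
      p (i, j, k) * (∑ r, p (r, s, k)) = p (i, s, k) * (∑ r, p (r, j, k)) := by
    intro i j s k
    rw [Finset.mul_sum, Finset.mul_sum]
    refine Finset.sum_congr rfl fun r _ => ?_
    have := h12 i r j s k
    linear_combination this
  have hk := hnz s k
  have ht := hnz s t
  have h23' := h23 j s k t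
  have key : (p (i, j, k) * p (r, s, t) - p (r, j, t) * p (i, s, k))
      * (∑ x, p (x, s, k)) * (∑ x, p (x, s, t)) = 0 := by
    have A1 := A i j s k
    have A2 := A r j s t
    linear_combination (p (r, s, t) * (∑ x, p (x, s, t))) * A1
      - (p (i, s, k) * (∑ x, p (x, s, k))) * A2
      + (p (i, s, k) * p (r, s, t)) * h23'
  rcases mul_eq_zero.mp key with h' | h'
  · rcases mul_eq_zero.mp h' with h'' | h''
    · exact h''
    · exact absurd h'' hk
  · exact absurd h' ht
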